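/- Let d,n∈ℕ⁺. There exists a constant C=C(n,d) such that for every K∈ℕ⁺, every 𝐦∈{1,…,K}^d and every multi-index α∈ℕ^d with |α| ≤ n−1: ‖ x^α s_𝐦(x) ‖_{H²([0,1]^d)} ≤ C K^{2 − d/2}. -/

import Mathlib

open scoped BigOperators
open MeasureTheory Set Filter

noncomputable section




/-- the unit cube `[0,1]^d` -/
def unitCube (d : ℕ) : Set (Fin d → ℝ) := Set.Icc 0 1

/-- the `W^{n,∞}([0,1]^d)` norm (strong-derivative formulation): the supremum over all
derivative orders `k ≤ n` and points of the cube of the norm of the `k`-th derivative. -/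
def wNormInf (d n : ℕ) (f : (Fin d → ℝ) → ℝ) : ℝ :=
  sSup {y : ℝ | ∃ k : ℕ, k ≤ n ∧ ∃ x ∈ unitCube d, y = ‖iteratedFDeriv ℝ k f x‖}

/-- the `H^n([0,1]^d)` Sobolev norm -/
def hNorm (d n : ℕ) (f : (Fin d → ℝ) → ℝ) : ℝ :=
  Real.sqrt (∑ k ∈ Finset.range (n + 1), ∫ x in unitCube d, ‖iteratedFDeriv ℝ k f x‖ ^ 2)

/-- Fourier coefficient `f̂(k)` of a (1-periodic) function -/
def fCoeff (d : ℕ) (f : (Fin d → ℝ) → ℂ) (k : Fin d → ℤ) : ℂ :=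
  ∫ x in unitCube d,
    f x * Complex.exp (-(2 * Real.pi * Complex.I) * ∑ j, (k j : ℂ) * (x j : ℂ))

/-- the weight `(1+|k|²)^s` -/
def hsWeight (d : ℕ) (s : ℝ) (k : Fin d → ℤ) : ℝ := (1 + ∑ j, ((k j : ℝ)) ^ 2) ^ s

/-- the `H^s(𝕋^d)` norm of a complex-valued function -/
def hsNormC (d : ℕ) (s : ℝ) (f : (Fin d → ℝ) → ℂ) : ℝ :=
  Real.sqrt (∑' k : Fin d → ℤ, hsWeight d s k * ‖fCoeff d f k‖ ^ 2)

/-- the `H^s(𝕋^d)` norm of a real-valued function -/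
def hsNorm (d : ℕ) (s : ℝ) (f : (Fin d → ℝ) → ℝ) : ℝ := hsNormC d s fun x => (f x : ℂ)

/-- `f` is 1-periodic in each coordinate -/
def isPeriodic (d : ℕ) (f : (Fin d → ℝ) → ℝ) : Prop :=
  ∀ (x : Fin d → ℝ) (j : Fin d), f (fun i => x i + if i = j then 1 else 0) = f x

/-- membership in `H^s(𝕋^d)` (continuous representative) -/
def memHs (d : ℕ) (s : ℝ) (f : (Fin d → ℝ) → ℝ) : Prop :=
  isPeriodic d f ∧ Continuous f ∧
    Summable fun k : Fin d → ℤ =>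
      hsWeight d s k * ‖fCoeff d (fun x => (f x : ℂ)) k‖ ^ 2

/-- the sampling (encoding) map `D(f) = (f(ν/(2N+1)))_{ν ∈ {0,…,2N}^d}` -/
def sampleD (d N : ℕ) (f : (Fin d → ℝ) → ℝ) : Fin ((2 * N + 1) ^ d) → ℝ :=
  fun i => f fun j => ((finFunctionFinEquiv.symm i j : ℕ) : ℝ) / (2 * N + 1)



/-- the piecewise-quadratic cutoff function `s` -/
def sFun (x : ℝ) : ℝ :=
  if x < 0 then 0
  else if x ≤ 1 / 2 then 2 * x ^ 2
  else if x ≤ 1 then -2 * (x - 1) ^ 2 + 1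
  else if x ≤ 5 then 1
  else if x ≤ 11 / 2 then -2 * (x - 5) ^ 2 + 1
  else if x ≤ 6 then 2 * (x - 6) ^ 2
  else 0

/-- `s_m(x) = s(4Kx + 5 - 4m)` -/
def smOne (K m : ℕ) (x : ℝ) : ℝ := sFun (4 * K * x + 5 - 4 * m)

/-- `s_𝐦(x) = ∏_j s_{m_j}(x_j)`, the partition-of-unity factor -/
def smProd (d K : ℕ) (mv : Fin d → ℕ) (x : Fin d → ℝ) : ℝ := ∏ j, smOne K (mv j) (x j)

def tent (x : ℝ) : ℝ := max 0 (min (4 * x) (4 - 4 * x))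

def sDer (x : ℝ) : ℝ := tent x - tent (x - 5)

lemma tent_nonneg (x : ℝ) : 0 ≤ tent x := le_max_left _ _

lemma tent_le_two (x : ℝ) : tent x ≤ 2 := by
  unfold tent
  apply max_le (by norm_num)
  rcases le_total x (1/2) with h | h
  · exact (min_le_left _ _).trans (by linarith)
  · exact (min_le_right _ _).trans (by linarith)

lemma abs_sDer_le (x : ℝ) : |sDer x| ≤ 2 := by
  have h1 := tent_nonneg x; have h2 := tent_le_two x
  have h3 := tent_nonneg (x - 5); have h4 := tent_le_two (x - 5)
  rw [abs_le]; unfold sDer; constructor <;> linarith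

lemma tent_lip (s t : ℝ) : |tent s - tent t| ≤ 4 * |s - t| := by
  unfold tent
  refine (abs_max_sub_max_le_max _ _ _ _).trans (max_le (by simpa using by positivity) ?_)
  refine (abs_min_sub_min_le_max _ _ _ _).trans (max_le ?_ ?_)
  · rw [show 4*s - 4*t = 4*(s-t) by ring, abs_mul, abs_of_nonneg (by norm_num : (0:ℝ) ≤ 4)]
  · rw [show (4 - 4*s) - (4 - 4*t) = 4*(t-s) by ring, abs_mul, abs_sub_comm t s,
      abs_of_nonneg (by norm_num : (0:ℝ) ≤ 4)]

lemma sDer_lip (s t : ℝ) : |sDer s - sDer t| ≤ 8 * |s - t| := by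
  have h1 := tent_lip s t
  have h2 := tent_lip (s - 5) (t - 5)
  rw [show s - 5 - (t - 5) = s - t by ring] at h2
  calc |sDer s - sDer t| = |(tent s - tent t) - (tent (s-5) - tent (t-5))| := by unfold sDer; ring_nf
    _ ≤ |tent s - tent t| + |tent (s-5) - tent (t-5)| := abs_sub _ _
    _ ≤ 8 * |s - t| := by linarith

lemma tent_eq_zero_left {x : ℝ} (h : x ≤ 0) : tent x = 0 :=
  max_eq_left ((min_le_left _ _).trans (by linarith))

lemma tent_eq_zero_right {x : ℝ} (h : 1 ≤ x) : tent x = 0 :=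
  max_eq_left ((min_le_right _ _).trans (by linarith))

lemma tent_eq_up {x : ℝ} (h0 : 0 ≤ x) (h : x ≤ 1/2) : tent x = 4 * x := by
  unfold tent; rw [min_eq_left (by linarith), max_eq_right (by linarith)]

lemma tent_eq_down {x : ℝ} (h0 : 1/2 ≤ x) (h : x ≤ 1) : tent x = 4 - 4 * x := by
  unfold tent; rw [min_eq_right (by linarith), max_eq_right (by linarith)]

/-- gluing two pieces with matching derivative at a point -/
lemma glue {f p q : ℝ → ℝ} {x₀ y₀ a b : ℝ} (ha : a < x₀) (hb : x₀ < b)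
    (hp : HasDerivAt p y₀ x₀) (hq : HasDerivAt q y₀ x₀)
    (hfp : ∀ y, a < y → y ≤ x₀ → f y = p y) (hfq : ∀ y, x₀ ≤ y → y < b → f y = q y) :
    HasDerivAt f y₀ x₀ := by
  have hl : HasDerivWithinAt f y₀ (Iic x₀) x₀ := by
    refine (hp.hasDerivWithinAt (s := Iic x₀)).congr_of_eventuallyEq ?_ (hfp x₀ ha le_rfl)
    filter_upwards [nhdsWithin_le_nhds (Ioi_mem_nhds ha), self_mem_nhdsWithin] with y h1 h2
    exact hfp y h1 h2
  have hr : HasDerivWithinAt f y₀ (Ici x₀) x₀ := by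
    refine (hq.hasDerivWithinAt (s := Ici x₀)).congr_of_eventuallyEq ?_ (hfq x₀ le_rfl hb)
    filter_upwards [nhdsWithin_le_nhds (Iio_mem_nhds hb), self_mem_nhdsWithin] with y h1 h2
    exact hfq y h2 h1
  have := hl.union hr
  rwa [Iic_union_Ici, hasDerivWithinAt_univ] at this

lemma quadDeriv (c r e x : ℝ) : HasDerivAt (fun y => c * (y - r) ^ 2 + e) (2 * c * (x - r)) x := by
  have h := ((((hasDerivAt_id x).sub_const r).pow 2).const_mul c).add_const e
  refine h.congr_deriv ?_; simp only [id, Nat.cast_ofNat]; ring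

lemma sFun_hasDerivAt (x : ℝ) : HasDerivAt sFun (sDer x) x := by
  rcases lt_trichotomy x 0 with hx | hx | hx
  · -- x < 0
    have hv : sDer x = 0 := by
      unfold sDer; rw [tent_eq_zero_left hx.le, tent_eq_zero_left (by linarith)]; ring
    rw [hv]
    refine glue (by linarith : x - 1 < x) hx
      (by convert quadDeriv 0 0 0 x using 1; ring) (by convert quadDeriv 0 0 0 x using 1; ring)
      (fun y h1 h2 => ?_) (fun y h1 h2 => ?_) <;>
    · show sFun y = 0 * (y - 0) ^ 2 + 0
      simp only [sFun]; rw [if_pos (by linarith)]; ring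
  · -- x = 0
    subst hx
    have hv : sDer 0 = 0 := by
      unfold sDer; rw [tent_eq_zero_left le_rfl, tent_eq_zero_left (by norm_num)]; ring
    rw [hv]
    refine glue (by norm_num : (-1:ℝ) < 0) (by norm_num : (0:ℝ) < 1/2)
      (by convert quadDeriv 0 0 0 0 using 1; ring) (by convert quadDeriv 2 0 0 0 using 1; norm_num)
      (fun y h1 h2 => ?_) (fun y h1 h2 => ?_)
    · show sFun y = 0 * (y - 0) ^ 2 + 0
      by_cases hy : y < 0
      · simp only [sFun]; rw [if_pos hy]; ring
      · have : y = 0 := le_antisymm h2 (not_lt.mp hy)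
        subst this; norm_num [sFun]
    · show sFun y = 2 * (y - 0) ^ 2 + 0
      simp only [sFun]; rw [if_neg (not_lt.mpr h1), if_pos (by linarith)]; ring
  rcases lt_trichotomy x (1/2) with hx2 | hx2 | hx2
  · -- 0 < x < 1/2
    have hv : sDer x = 2 * 2 * (x - 0) := by
      unfold sDer; rw [tent_eq_up hx.le hx2.le, tent_eq_zero_left (by linarith)]; ring
    rw [hv]
    refine glue hx hx2 (quadDeriv 2 0 0 x) (quadDeriv 2 0 0 x)
      (fun y h1 h2 => ?_) (fun y h1 h2 => ?_) <;>
    · show sFun y = 2 * (y - 0) ^ 2 + 0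
      simp only [sFun]; rw [if_neg (by linarith), if_pos (by linarith)]; ring
  · -- x = 1/2
    subst hx2
    have hv : sDer (1/2) = 2 := by
      unfold sDer
      rw [tent_eq_up (by norm_num) le_rfl, tent_eq_zero_left (by norm_num)]; norm_num
    rw [hv]
    refine glue (by norm_num : (0:ℝ) < 1/2) (by norm_num : (1/2:ℝ) < 1)
      (by convert quadDeriv 2 0 0 (1/2:ℝ) using 1; norm_num)
      (by convert quadDeriv (-2) 1 1 (1/2:ℝ) using 1; norm_num)
      (fun y h1 h2 => ?_) (fun y h1 h2 => ?_)
    · show sFun y = 2 * (y - 0) ^ 2 + 0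
      simp only [sFun]; rw [if_neg (by linarith), if_pos h2]; ring
    · show sFun y = -2 * (y - 1) ^ 2 + 1
      simp only [sFun]; rw [if_neg (by linarith)]
      by_cases hy : y ≤ 1/2
      · have : y = 1/2 := le_antisymm hy h1
        subst this; norm_num
      · rw [if_neg hy, if_pos (by linarith)]
  rcases lt_trichotomy x 1 with hx3 | hx3 | hx3
  · -- 1/2 < x < 1
    have hv : sDer x = 2 * (-2) * (x - 1) := by
      unfold sDer; rw [tent_eq_down hx2.le hx3.le, tent_eq_zero_left (by linarith)]; ring
    rw [hv]
    refine glue hx2 hx3 (quadDeriv (-2) 1 1 x) (quadDeriv (-2) 1 1 x)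
      (fun y h1 h2 => ?_) (fun y h1 h2 => ?_) <;>
    · show sFun y = -2 * (y - 1) ^ 2 + 1
      simp only [sFun]; rw [if_neg (by linarith), if_neg (by linarith), if_pos (by linarith)]
  · -- x = 1
    subst hx3
    have hv : sDer 1 = 0 := by
      unfold sDer; rw [tent_eq_zero_right le_rfl, tent_eq_zero_left (by norm_num)]; ring
    rw [hv]
    refine glue (by norm_num : (1/2:ℝ) < 1) (by norm_num : (1:ℝ) < 5)
      (by convert quadDeriv (-2) 1 1 1 using 1; norm_num)
      (by convert quadDeriv 0 0 1 1 using 1; norm_num)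
      (fun y h1 h2 => ?_) (fun y h1 h2 => ?_)
    · show sFun y = -2 * (y - 1) ^ 2 + 1
      simp only [sFun]; rw [if_neg (by linarith), if_neg (by linarith), if_pos h2]
    · show sFun y = 0 * (y - 0) ^ 2 + 1
      simp only [sFun]; rw [if_neg (by linarith)]
      by_cases hy : y ≤ 1
      · have : y = 1 := le_antisymm hy h1
        subst this; norm_num
      · rw [if_neg (by linarith), if_neg hy, if_pos (by linarith)]; ring
  rcases lt_trichotomy x 5 with hx4 | hx4 | hx4
  · -- 1 < x < 5
    have hv : sDer x = 0 := by
      unfold sDer; rw [tent_eq_zero_right hx3.le, tent_eq_zero_left (by linarith)]; ring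
    rw [hv]
    refine glue hx3 hx4
      (by convert quadDeriv 0 0 1 x using 1; ring) (by convert quadDeriv 0 0 1 x using 1; ring)
      (fun y h1 h2 => ?_) (fun y h1 h2 => ?_) <;>
    · show sFun y = 0 * (y - 0) ^ 2 + 1
      simp only [sFun]
      rw [if_neg (by linarith), if_neg (by linarith), if_neg (by linarith), if_pos (by linarith)]
      ring
  · -- x = 5
    subst hx4
    have hv : sDer 5 = 0 := by
      unfold sDer; rw [tent_eq_zero_right (by norm_num), tent_eq_zero_left (by norm_num)]; ring
    rw [hv]
    refine glue (by norm_num : (1:ℝ) < 5) (by norm_num : (5:ℝ) < 11/2)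
      (by convert quadDeriv 0 0 1 5 using 1; norm_num)
      (by convert quadDeriv (-2) 5 1 5 using 1; norm_num)
      (fun y h1 h2 => ?_) (fun y h1 h2 => ?_)
    · show sFun y = 0 * (y - 0) ^ 2 + 1
      simp only [sFun]
      rw [if_neg (by linarith), if_neg (by linarith), if_neg (by linarith), if_pos h2]; ring
    · show sFun y = -2 * (y - 5) ^ 2 + 1
      simp only [sFun]; rw [if_neg (by linarith), if_neg (by linarith), if_neg (by linarith)]
      by_cases hy : y ≤ 5
      · have : y = 5 := le_antisymm hy h1
        subst this; norm_num
      · rw [if_neg hy, if_pos (by linarith)]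
  rcases lt_trichotomy x (11/2) with hx5 | hx5 | hx5
  · -- 5 < x < 11/2
    have hv : sDer x = 2 * (-2) * (x - 5) := by
      unfold sDer
      rw [tent_eq_zero_right (by linarith), tent_eq_up (by linarith) (by linarith)]; ring
    rw [hv]
    refine glue hx4 hx5 (quadDeriv (-2) 5 1 x) (quadDeriv (-2) 5 1 x)
      (fun y h1 h2 => ?_) (fun y h1 h2 => ?_) <;>
    · show sFun y = -2 * (y - 5) ^ 2 + 1
      simp only [sFun]
      rw [if_neg (by linarith), if_neg (by linarith), if_neg (by linarith), if_neg (by linarith),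
        if_pos (by linarith)]
  · -- x = 11/2
    subst hx5
    have hv : sDer (11/2) = -2 := by
      unfold sDer
      rw [tent_eq_zero_right (by norm_num), tent_eq_up (by norm_num) (by norm_num)]; norm_num
    rw [hv]
    refine glue (by norm_num : (5:ℝ) < 11/2) (by norm_num : (11/2:ℝ) < 6)
      (by convert quadDeriv (-2) 5 1 (11/2:ℝ) using 1; norm_num)
      (by convert quadDeriv 2 6 0 (11/2:ℝ) using 1; norm_num)
      (fun y h1 h2 => ?_) (fun y h1 h2 => ?_)
    · show sFun y = -2 * (y - 5) ^ 2 + 1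
      simp only [sFun]
      rw [if_neg (by linarith), if_neg (by linarith), if_neg (by linarith), if_neg (by linarith),
        if_pos h2]
    · show sFun y = 2 * (y - 6) ^ 2 + 0
      simp only [sFun]
      rw [if_neg (by linarith), if_neg (by linarith), if_neg (by linarith), if_neg (by linarith)]
      by_cases hy : y ≤ 11/2
      · have : y = 11/2 := le_antisymm hy h1
        subst this; norm_num
      · rw [if_neg hy, if_pos (by linarith)]; ring
  rcases lt_trichotomy x 6 with hx6 | hx6 | hx6
  · -- 11/2 < x < 6
    have hv : sDer x = 2 * 2 * (x - 6) := by
      unfold sDer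
      rw [tent_eq_zero_right (by linarith), tent_eq_down (by linarith) (by linarith)]; ring
    rw [hv]
    refine glue hx5 hx6 (quadDeriv 2 6 0 x) (quadDeriv 2 6 0 x)
      (fun y h1 h2 => ?_) (fun y h1 h2 => ?_) <;>
    · show sFun y = 2 * (y - 6) ^ 2 + 0
      simp only [sFun]
      rw [if_neg (by linarith), if_neg (by linarith), if_neg (by linarith), if_neg (by linarith),
        if_neg (by linarith), if_pos (by linarith)]
      ring
  · -- x = 6
    subst hx6
    have hv : sDer 6 = 0 := by
      unfold sDer; rw [tent_eq_zero_right (by norm_num), tent_eq_zero_right (by norm_num)]; ring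
    rw [hv]
    refine glue (by norm_num : (11/2:ℝ) < 6) (by norm_num : (6:ℝ) < 7)
      (by convert quadDeriv 2 6 0 6 using 1; norm_num)
      (by convert quadDeriv 0 0 0 6 using 1; norm_num)
      (fun y h1 h2 => ?_) (fun y h1 h2 => ?_)
    · show sFun y = 2 * (y - 6) ^ 2 + 0
      simp only [sFun]
      rw [if_neg (by linarith), if_neg (by linarith), if_neg (by linarith), if_neg (by linarith),
        if_neg (by linarith), if_pos h2]
      ring
    · show sFun y = 0 * (y - 0) ^ 2 + 0
      simp only [sFun]
      rw [if_neg (by linarith), if_neg (by linarith), if_neg (by linarith), if_neg (by linarith),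
        if_neg (by linarith)]
      by_cases hy : y ≤ 6
      · have : y = 6 := le_antisymm hy h1
        subst this; norm_num
      · rw [if_neg hy]; ring
  · -- 6 < x
    have hv : sDer x = 0 := by
      unfold sDer; rw [tent_eq_zero_right (by linarith), tent_eq_zero_right (by linarith)]; ring
    rw [hv]
    refine glue hx6 (by linarith : x < x + 1)
      (by convert quadDeriv 0 0 0 x using 1; ring) (by convert quadDeriv 0 0 0 x using 1; ring)
      (fun y h1 h2 => ?_) (fun y h1 h2 => ?_) <;>
    · show sFun y = 0 * (y - 0) ^ 2 + 0
      simp only [sFun]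
      rw [if_neg (by linarith), if_neg (by linarith), if_neg (by linarith), if_neg (by linarith),
        if_neg (by linarith), if_neg (by linarith)]
      ring
def smOneD (K m : ℕ) (t : ℝ) : ℝ := 4 * K * sDer (4 * K * t + 5 - 4 * m)

lemma smOne_hasDerivAt (K m : ℕ) (t : ℝ) : HasDerivAt (smOne K m) (smOneD K m t) t := by
  have h1 : HasDerivAt (fun t : ℝ => 4 * K * t + 5 - 4 * m) (4 * K) t := by
    simpa using (((hasDerivAt_id t).const_mul (4 * K : ℝ)).add_const 5).sub_const (4 * m : ℝ)
  have h2 := (sFun_hasDerivAt (4 * K * t + 5 - 4 * m)).comp t h1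
  have : smOne K m = sFun ∘ fun t : ℝ => 4 * K * t + 5 - 4 * m := rfl
  rw [this]
  refine h2.congr_deriv ?_
  unfold smOneD; ring

lemma sFun_mem (x : ℝ) : 0 ≤ sFun x ∧ sFun x ≤ 1 := by
  unfold sFun; split_ifs <;> constructor <;> nlinarith

lemma abs_smOne_le (K m : ℕ) (t : ℝ) : |smOne K m t| ≤ 1 := by
  have := sFun_mem (4 * K * t + 5 - 4 * m)
  rw [abs_le]; unfold smOne; constructor <;> linarith [this.1, this.2]

lemma abs_smOneD_le (K m : ℕ) (t : ℝ) : |smOneD K m t| ≤ 8 * K := by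
  have h := abs_sDer_le (4 * K * t + 5 - 4 * m)
  unfold smOneD
  rw [abs_mul, abs_of_nonneg (by positivity : (0:ℝ) ≤ 4 * K)]
  nlinarith [abs_nonneg (sDer (4 * K * t + 5 - 4 * m)), Nat.cast_nonneg (α := ℝ) K]

lemma smOneD_lip (K m : ℕ) (s t : ℝ) :
    |smOneD K m s - smOneD K m t| ≤ 128 * K ^ 2 * |s - t| := by
  have h := sDer_lip (4 * K * s + 5 - 4 * m) (4 * K * t + 5 - 4 * m)
  have hK : (0:ℝ) ≤ (K:ℝ) := Nat.cast_nonneg K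
  have e1 : (4 * K * s + 5 - 4 * m) - (4 * K * t + 5 - 4 * m) = 4 * K * (s - t) := by ring
  rw [e1, abs_mul, abs_of_nonneg (by positivity : (0:ℝ) ≤ 4 * (K:ℝ))] at h
  have e2 : smOneD K m s - smOneD K m t
      = 4 * K * (sDer (4 * K * s + 5 - 4 * m) - sDer (4 * K * t + 5 - 4 * m)) := by
    unfold smOneD; ring
  rw [e2, abs_mul, abs_of_nonneg (by positivity : (0:ℝ) ≤ 4 * (K:ℝ))]
  nlinarith [abs_nonneg (s - t)]

lemma sFun_eq_zero_of_nonpos {x : ℝ} (h : x ≤ 0) : sFun x = 0 := by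
  unfold sFun
  rcases lt_or_eq_of_le h with h' | h'
  · rw [if_pos h']
  · subst h'; norm_num

lemma sFun_eq_zero_of_ge {x : ℝ} (h : 6 ≤ x) : sFun x = 0 := by
  unfold sFun
  rw [if_neg (by linarith), if_neg (by linarith), if_neg (by linarith), if_neg (by linarith),
    if_neg (by linarith)]
  by_cases hy : x ≤ 6
  · have : x = 6 := le_antisymm hy h
    subst this; norm_num
  · rw [if_neg hy]

/-- trunk factor -/
def gFun (a K m : ℕ) (t : ℝ) : ℝ := t ^ a * smOne K m t

def gFunD (a K m : ℕ) (t : ℝ) : ℝ :=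
  (a : ℝ) * t ^ (a - 1) * smOne K m t + t ^ a * smOneD K m t

lemma gFun_hasDerivAt (a K m : ℕ) (t : ℝ) : HasDerivAt (gFun a K m) (gFunD a K m t) t := by
  exact (hasDerivAt_pow a t).mul (smOne_hasDerivAt K m t)

/-- smOne vanishes left of `(4m-5)/(4K)` and right of `(4m+1)/(4K)` -/
lemma smOne_eq_zero_left {K m : ℕ} (hK : 0 < K) {t : ℝ}
    (h : t ≤ ((4 * m : ℝ) - 5) / (4 * K)) : smOne K m t = 0 := by
  have hK' : (0:ℝ) < 4 * K := by positivity
  apply sFun_eq_zero_of_nonpos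
  rw [le_div_iff₀ hK'] at h
  nlinarith

lemma smOne_eq_zero_right {K m : ℕ} (hK : 0 < K) {t : ℝ}
    (h : ((4 * m : ℝ) + 1) / (4 * K) ≤ t) : smOne K m t = 0 := by
  have hK' : (0:ℝ) < 4 * K := by positivity
  apply sFun_eq_zero_of_ge
  rw [div_le_iff₀ hK'] at h
  nlinarith
lemma lip_of_deriv {f f' : ℝ → ℝ} {L : ℝ}
    (hd : ∀ t, HasDerivAt f (f' t) t) (hb : ∀ t ∈ Icc (-2:ℝ) 2, |f' t| ≤ L) :
    ∀ s ∈ Icc (-2:ℝ) 2, ∀ t ∈ Icc (-2:ℝ) 2, |f s - f t| ≤ L * |s - t| := by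
  intro s hs t ht
  have := Convex.norm_image_sub_le_of_norm_hasDerivWithin_le
    (f := f) (f' := f') (C := L) (s := Icc (-2:ℝ) 2)
    (fun x hx => (hd x).hasDerivWithinAt) (fun x hx => by simpa using hb x hx)
    (convex_Icc _ _) ht hs
  simpa [Real.norm_eq_abs] using this

lemma abs_mul_sub_mul (a b c d : ℝ) : |a * b - c * d| ≤ |a| * |b - d| + |d| * |a - c| := by
  have h : a * b - c * d = a * (b - d) + d * (a - c) := by ring
  rw [h]
  exact (abs_add_le _ _).trans (by rw [abs_mul, abs_mul])

lemma abs_prod_le {ι : Type*} (s : Finset ι) (u : ι → ℝ) {M : ℝ} (hM : 0 ≤ M)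
    (hu : ∀ i ∈ s, |u i| ≤ M) : |∏ i ∈ s, u i| ≤ M ^ s.card := by
  rw [Finset.abs_prod]
  calc ∏ i ∈ s, |u i| ≤ ∏ i ∈ s, M := Finset.prod_le_prod (fun i _ => abs_nonneg _) hu
    _ = M ^ s.card := Finset.prod_const M

lemma abs_prod_sub_prod {ι : Type*} (s : Finset ι) (u v : ι → ℝ) {M : ℝ} (hM : 1 ≤ M)
    (hu : ∀ i ∈ s, |u i| ≤ M) (hv : ∀ i ∈ s, |v i| ≤ M) :
    |∏ i ∈ s, u i - ∏ i ∈ s, v i| ≤ M ^ s.card * ∑ i ∈ s, |u i - v i| := by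
  classical
  have hM0 : (0:ℝ) ≤ M := le_trans zero_le_one hM
  induction s using Finset.induction_on with
  | empty => simp
  | @insert a s ha ih =>
    rw [Finset.prod_insert ha, Finset.prod_insert ha, Finset.sum_insert ha,
      Finset.card_insert_of_notMem ha]
    have husr : ∀ i ∈ s, |u i| ≤ M := fun i hi => hu i (Finset.mem_insert_of_mem hi)
    have hvsr : ∀ i ∈ s, |v i| ≤ M := fun i hi => hv i (Finset.mem_insert_of_mem hi)
    have ih' := ih husr hvsr
    have h1 := abs_mul_sub_mul (u a) (∏ i ∈ s, u i) (v a) (∏ i ∈ s, v i)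
    have h2 : |u a| * |∏ i ∈ s, u i - ∏ i ∈ s, v i| ≤ M * (M ^ s.card * ∑ i ∈ s, |u i - v i|) :=
      mul_le_mul (hu a (Finset.mem_insert_self a s)) ih' (abs_nonneg _) hM0
    have h3 : |∏ i ∈ s, v i| * |u a - v a| ≤ M ^ s.card * |u a - v a| :=
      mul_le_mul_of_nonneg_right (abs_prod_le s v hM0 hvsr) (abs_nonneg _)
    have h4 : M ^ s.card * |u a - v a| ≤ M ^ (s.card + 1) * |u a - v a| := by
      apply mul_le_mul_of_nonneg_right _ (abs_nonneg _)
      calc M ^ s.card = M ^ s.card * 1 := (mul_one _).symm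
        _ ≤ M ^ s.card * M := by
            apply mul_le_mul_of_nonneg_left hM (pow_nonneg hM0 _)
        _ = M ^ (s.card + 1) := (pow_succ M s.card).symm
    have hsum : (0:ℝ) ≤ ∑ i ∈ s, |u i - v i| := Finset.sum_nonneg fun i _ => abs_nonneg _
    calc |u a * ∏ i ∈ s, u i - v a * ∏ i ∈ s, v i|
        ≤ |u a| * |∏ i ∈ s, u i - ∏ i ∈ s, v i| + |∏ i ∈ s, v i| * |u a - v a| := h1
      _ ≤ M * (M ^ s.card * ∑ i ∈ s, |u i - v i|) + M ^ (s.card + 1) * |u a - v a| := by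
          exact add_le_add h2 (h3.trans h4)
      _ = M ^ (s.card + 1) * (|u a - v a| + ∑ i ∈ s, |u i - v i|) := by ring

lemma pow_bound {a n : ℕ} (han : a ≤ n) {t : ℝ} (ht : t ∈ Icc (-2:ℝ) 2) :
    |t ^ a| ≤ 2 ^ n := by
  rw [abs_pow]
  calc |t| ^ a ≤ 2 ^ a := pow_le_pow_left₀ (abs_nonneg t) (abs_le.mpr ⟨ht.1, ht.2⟩) a
    _ ≤ (2:ℝ) ^ n := pow_le_pow_right₀ one_le_two han

lemma gFun_bound {a n K m : ℕ} (han : a ≤ n) {t : ℝ} (ht : t ∈ Icc (-2:ℝ) 2) :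
    |gFun a K m t| ≤ 2 ^ n := by
  rw [gFun, abs_mul]
  calc |t ^ a| * |smOne K m t| ≤ 2 ^ n * 1 :=
      mul_le_mul (pow_bound han ht) (abs_smOne_le K m t) (abs_nonneg _) (by positivity)
    _ = 2 ^ n := mul_one _

lemma gFunD_bound {a n K m : ℕ} (han : a ≤ n) (hK : 1 ≤ (K:ℝ)) {t : ℝ}
    (ht : t ∈ Icc (-2:ℝ) 2) :
    |gFunD a K m t| ≤ 2 ^ n * ((n:ℝ) + 8) * K := by
  have hK0 : (0:ℝ) ≤ K := le_trans zero_le_one hK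
  have h2n : (0:ℝ) ≤ 2 ^ n := by positivity
  have h1 : |(a : ℝ) * t ^ (a - 1) * smOne K m t| ≤ (n:ℝ) * 2 ^ n := by
    rw [abs_mul, abs_mul, Nat.abs_cast]
    have e1 : (a:ℝ) * |t ^ (a-1)| ≤ (n:ℝ) * 2 ^ n :=
      mul_le_mul (Nat.cast_le.mpr han) (pow_bound (le_trans (Nat.sub_le a 1) han) ht)
        (abs_nonneg _) (Nat.cast_nonneg n)
    have e2 := abs_smOne_le K m t
    nlinarith [abs_nonneg (t ^ (a-1)), abs_nonneg (smOne K m t),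
      mul_nonneg (Nat.cast_nonneg (α := ℝ) a) (abs_nonneg (t ^ (a-1)))]
  have h2 : |t ^ a * smOneD K m t| ≤ 2 ^ n * (8 * K) :=
    (abs_mul _ _).le.trans (mul_le_mul (pow_bound han ht) (abs_smOneD_le K m t)
      (abs_nonneg _) h2n)
  rw [gFunD]
  refine (abs_add_le _ _).trans ?_
  nlinarith [mul_nonneg (Nat.cast_nonneg (α := ℝ) n) h2n]

lemma gFun_lip {a n K m : ℕ} (han : a ≤ n) (hK : 1 ≤ (K:ℝ)) :
    ∀ s ∈ Icc (-2:ℝ) 2, ∀ t ∈ Icc (-2:ℝ) 2,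
      |gFun a K m s - gFun a K m t| ≤ 2 ^ n * ((n:ℝ) + 8) * K * |s - t| :=
  lip_of_deriv (gFun_hasDerivAt a K m) (fun t ht => gFunD_bound han hK ht)

lemma smOne_lip (K m : ℕ) : ∀ s ∈ Icc (-2:ℝ) 2, ∀ t ∈ Icc (-2:ℝ) 2,
    |smOne K m s - smOne K m t| ≤ (8 * K) * |s - t| :=
  lip_of_deriv (smOne_hasDerivAt K m) (fun t _ => abs_smOneD_le K m t)

lemma powmul_lip {a n : ℕ} (han : a ≤ n) : ∀ s ∈ Icc (-2:ℝ) 2, ∀ t ∈ Icc (-2:ℝ) 2,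
    |(a:ℝ) * s ^ (a-1) - (a:ℝ) * t ^ (a-1)| ≤ ((n:ℝ) * ((n:ℝ) * 2 ^ n)) * |s - t| := by
  refine lip_of_deriv (f' := fun x => (a:ℝ) * ((a-1 : ℕ) * x ^ (a-1-1)))
    (fun x => (hasDerivAt_pow (a-1) x).const_mul (a:ℝ)) (fun x hx => ?_)
  rw [abs_mul, abs_mul, Nat.abs_cast, Nat.abs_cast]
  have e1 : ((a-1:ℕ):ℝ) * |x ^ (a-1-1)| ≤ (n:ℝ) * 2 ^ n :=
    mul_le_mul (Nat.cast_le.mpr (le_trans (Nat.sub_le a 1) han))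
      (pow_bound (le_trans (Nat.sub_le _ 1) (le_trans (Nat.sub_le a 1) han)) hx)
      (abs_nonneg _) (Nat.cast_nonneg n)
  have e2 : (a:ℝ) ≤ (n:ℝ) := Nat.cast_le.mpr han
  have e3 : (0:ℝ) ≤ ((a-1:ℕ):ℝ) * |x ^ (a-1-1)| :=
    mul_nonneg (Nat.cast_nonneg _) (abs_nonneg _)
  exact mul_le_mul e2 e1 e3 (Nat.cast_nonneg n)

lemma pow_lip {a n : ℕ} (han : a ≤ n) : ∀ s ∈ Icc (-2:ℝ) 2, ∀ t ∈ Icc (-2:ℝ) 2,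
    |s ^ a - t ^ a| ≤ ((n:ℝ) * 2 ^ n) * |s - t| := by
  refine lip_of_deriv (f' := fun x => (a:ℝ) * x ^ (a-1)) (fun x => hasDerivAt_pow a x)
    (fun x hx => ?_)
  rw [abs_mul, Nat.abs_cast]
  exact mul_le_mul (Nat.cast_le.mpr han) (pow_bound (le_trans (Nat.sub_le a 1) han) hx)
    (abs_nonneg _) (Nat.cast_nonneg n)

lemma key_arith {N P Q D : ℝ} (hN : 0 ≤ N) (hP : 0 ≤ P) (hD : 0 ≤ D) (hQ : 1 ≤ Q) :
    ((N * P) * ((8 * Q) * D) + 1 * ((N * (N * P)) * D))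
      + (P * (128 * Q ^ 2 * D) + (8 * Q) * ((N * P) * D))
      ≤ P * (N ^ 2 + 16 * N + 128) * Q ^ 2 * D := by
  have hQ0 : 0 ≤ Q := le_trans zero_le_one hQ
  have h1 : Q ≤ Q ^ 2 := by nlinarith
  have h2 : (1:ℝ) ≤ Q ^ 2 := by nlinarith
  nlinarith [mul_nonneg (mul_nonneg (mul_nonneg hN hP) hD) (sub_nonneg.mpr h1),
    mul_nonneg (mul_nonneg (mul_nonneg (mul_nonneg hN hN) hP) hD) (sub_nonneg.mpr h2)]

lemma gFunD_lip {a n K m : ℕ} (han : a ≤ n) (hK : 1 ≤ (K:ℝ)) :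
    ∀ s ∈ Icc (-2:ℝ) 2, ∀ t ∈ Icc (-2:ℝ) 2,
      |gFunD a K m s - gFunD a K m t|
        ≤ 2 ^ n * ((n:ℝ)^2 + 16 * n + 128) * K ^ 2 * |s - t| := by
  intro s hs t ht
  have hK0 : (0:ℝ) ≤ K := le_trans zero_le_one hK
  have h2n : (0:ℝ) ≤ (2:ℝ) ^ n := by positivity
  have hn0 : (0:ℝ) ≤ (n:ℝ) := Nat.cast_nonneg n
  have hD : (0:ℝ) ≤ |s - t| := abs_nonneg _
  have e : gFunD a K m s - gFunD a K m t
      = ((a:ℝ) * s ^ (a-1) * smOne K m s - (a:ℝ) * t ^ (a-1) * smOne K m t)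
        + (s ^ a * smOneD K m s - t ^ a * smOneD K m t) := by
    unfold gFunD; ring
  rw [e]
  refine (abs_add_le _ _).trans ?_
  have t1 := abs_mul_sub_mul ((a:ℝ) * s ^ (a-1)) (smOne K m s) ((a:ℝ) * t ^ (a-1)) (smOne K m t)
  have t2 := abs_mul_sub_mul (s ^ a) (smOneD K m s) (t ^ a) (smOneD K m t)
  -- bounds for term 1
  have bA : |(a:ℝ) * s ^ (a-1)| ≤ (n:ℝ) * 2 ^ n := by
    rw [abs_mul, Nat.abs_cast]
    exact mul_le_mul (Nat.cast_le.mpr han) (pow_bound (le_trans (Nat.sub_le a 1) han) hs)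
      (abs_nonneg _) hn0
  have bB : |smOne K m t| ≤ 1 := abs_smOne_le K m t
  have lB := smOne_lip K m s hs t ht
  have lA := powmul_lip han s hs t ht
  have u1 : |(a:ℝ) * s ^ (a-1)| * |smOne K m s - smOne K m t|
      ≤ ((n:ℝ) * 2 ^ n) * ((8 * K) * |s - t|) :=
    mul_le_mul bA lB (abs_nonneg _) (by positivity)
  have u2 : |smOne K m t| * |(a:ℝ) * s ^ (a-1) - (a:ℝ) * t ^ (a-1)|
      ≤ 1 * (((n:ℝ) * ((n:ℝ) * 2 ^ n)) * |s - t|) :=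
    mul_le_mul bB lA (abs_nonneg _) zero_le_one
  -- bounds for term 2
  have bC : |s ^ a| ≤ 2 ^ n := pow_bound han hs
  have bD : |smOneD K m t| ≤ 8 * K := abs_smOneD_le K m t
  have lD := smOneD_lip K m s t
  have lC := pow_lip han s hs t ht
  have u3 : |s ^ a| * |smOneD K m s - smOneD K m t| ≤ 2 ^ n * (128 * K ^ 2 * |s - t|) :=
    mul_le_mul bC lD (abs_nonneg _) h2n
  have u4 : |smOneD K m t| * |s ^ a - t ^ a| ≤ (8 * K) * (((n:ℝ) * 2 ^ n) * |s - t|) :=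
    mul_le_mul bD lC (abs_nonneg _) (by positivity)
  have hK2 : (1:ℝ) ≤ K ^ 2 := by nlinarith
  have hKK2 : (K:ℝ) ≤ K ^ 2 := by nlinarith
  have key := key_arith hn0 h2n hD hK
  calc |(a:ℝ) * s ^ (a-1) * smOne K m s - (a:ℝ) * t ^ (a-1) * smOne K m t|
        + |s ^ a * smOneD K m s - t ^ a * smOneD K m t|
      ≤ (((n:ℝ) * 2 ^ n) * ((8 * K) * |s - t|) + 1 * (((n:ℝ) * ((n:ℝ) * 2 ^ n)) * |s - t|))
        + (2 ^ n * (128 * K ^ 2 * |s - t|) + (8 * K) * (((n:ℝ) * 2 ^ n) * |s - t|)) := by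
        refine add_le_add (t1.trans (add_le_add u1 u2)) (t2.trans (add_le_add u3 u4))
    _ ≤ 2 ^ n * ((n:ℝ)^2 + 16 * n + 128) * K ^ 2 * |s - t| := key
def Fder (d K : ℕ) (mv α : Fin d → ℕ) (x : Fin d → ℝ) : (Fin d → ℝ) →L[ℝ] ℝ :=
  ∑ i, (∏ j ∈ Finset.univ.erase i, gFun (α j) K (mv j) (x j)) •
    ((gFunD (α i) K (mv i) (x i)) • ContinuousLinearMap.proj i)

lemma hasFDerivAt_gprod (d K : ℕ) (mv α : Fin d → ℕ) (x : Fin d → ℝ) :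
    HasFDerivAt (fun x : Fin d → ℝ => ∏ i, gFun (α i) K (mv i) (x i)) (Fder d K mv α x) x := by
  refine HasFDerivAt.finset_prod (fun i _ => ?_)
  have hproj : HasFDerivAt (fun v : Fin d → ℝ => v i)
      (ContinuousLinearMap.proj (R := ℝ) (φ := fun _ : Fin d => ℝ) i) x :=
    (ContinuousLinearMap.proj (R := ℝ) (φ := fun _ : Fin d => ℝ) i).hasFDerivAt
  exact (gFun_hasDerivAt (α i) K (mv i) (x i)).comp_hasFDerivAt x hproj

lemma norm_proj_le (d : ℕ) (i : Fin d) :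
    ‖(ContinuousLinearMap.proj i : (Fin d → ℝ) →L[ℝ] ℝ)‖ ≤ 1 :=
  ContinuousLinearMap.opNorm_le_bound _ zero_le_one fun y => by
    simpa using norm_le_pi_norm y i

lemma one_le_two_pow (n : ℕ) : (1:ℝ) ≤ 2 ^ n := by
  simpa using pow_le_pow_right₀ (one_le_two (α := ℝ)) (Nat.zero_le n)

lemma card_erase_le (d : ℕ) (i : Fin d) : (Finset.univ.erase i).card ≤ d := by
  refine (Finset.card_le_univ _).trans ?_
  simp

lemma prod_erase_bound {d n K : ℕ} {mv α : Fin d → ℕ} (hα : ∀ i, α i ≤ n)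
    {x : Fin d → ℝ} (hx : ∀ i, x i ∈ Icc (-2:ℝ) 2) (i : Fin d) :
    |∏ j ∈ Finset.univ.erase i, gFun (α j) K (mv j) (x j)| ≤ ((2:ℝ) ^ n) ^ d := by
  refine (abs_prod_le _ _ (by positivity) (fun j _ => gFun_bound (hα j) (hx j))).trans ?_
  exact pow_le_pow_right₀ (one_le_two_pow n) (card_erase_le d i)

lemma norm_smul_proj (d : ℕ) (c : ℝ) (i : Fin d) :
    ‖c • (ContinuousLinearMap.proj (R := ℝ) (φ := fun _ : Fin d => ℝ) i)‖ ≤ |c| := by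
  refine ContinuousLinearMap.opNorm_le_bound _ (abs_nonneg c) fun y => ?_
  rw [ContinuousLinearMap.smul_apply, ContinuousLinearMap.proj_apply, smul_eq_mul,
    Real.norm_eq_abs, abs_mul]
  exact mul_le_mul_of_nonneg_left (by simpa [Real.norm_eq_abs] using norm_le_pi_norm y i)
    (abs_nonneg c)

lemma Fder_norm_le {d n K : ℕ} {mv α : Fin d → ℕ} (hα : ∀ i, α i ≤ n) (hK : 1 ≤ (K:ℝ))
    {x : Fin d → ℝ} (hx : ∀ i, x i ∈ Icc (-2:ℝ) 2) :
    ‖Fder d K mv α x‖ ≤ d * (((2:ℝ) ^ n) ^ d * (2 ^ n * ((n:ℝ) + 8) * K)) := by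
  have hK0 : (0:ℝ) ≤ K := le_trans zero_le_one hK
  refine (norm_sum_le _ _).trans ?_
  have hterm : ∀ i ∈ Finset.univ,
      ‖(∏ j ∈ Finset.univ.erase i, gFun (α j) K (mv j) (x j)) •
        ((gFunD (α i) K (mv i) (x i)) • ContinuousLinearMap.proj (R := ℝ)
          (φ := fun _ : Fin d => ℝ) i)‖
      ≤ ((2:ℝ) ^ n) ^ d * (2 ^ n * ((n:ℝ) + 8) * K) := by
    intro i _
    rw [smul_smul]
    refine (norm_smul_proj d _ i).trans ?_
    rw [abs_mul]
    exact mul_le_mul (prod_erase_bound (K := K) (mv := mv) hα hx i)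
      (gFunD_bound (hα i) hK (hx i)) (abs_nonneg _) (by positivity)
  refine (Finset.sum_le_card_nsmul _ _ _ hterm).trans ?_
  simp only [Finset.card_univ, Fintype.card_fin, nsmul_eq_mul]
  exact le_rfl

lemma Fder_lip {d n K : ℕ} {mv α : Fin d → ℕ} (hα : ∀ i, α i ≤ n) (hK : 1 ≤ (K:ℝ))
    {x y : Fin d → ℝ} (hx : ∀ i, x i ∈ Icc (-2:ℝ) 2) (hy : ∀ i, y i ∈ Icc (-2:ℝ) 2) :
    ‖Fder d K mv α x - Fder d K mv α y‖
      ≤ ((d:ℝ) * ((2:ℝ) ^ n) ^ d *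
          ((d:ℝ) * (2 ^ n * ((n:ℝ) + 8)) ^ 2 + 2 ^ n * ((n:ℝ)^2 + 16 * n + 128)) * K ^ 2)
        * ‖x - y‖ := by
  have hK0 : (0:ℝ) ≤ K := le_trans zero_le_one hK
  have hA1 : (1:ℝ) ≤ 2 ^ n := one_le_two_pow n
  have hA0 : (0:ℝ) ≤ 2 ^ n := by positivity
  have hxy : (0:ℝ) ≤ ‖x - y‖ := norm_nonneg _
  have hcoord : ∀ j : Fin d, |x j - y j| ≤ ‖x - y‖ := fun j => by
    simpa [Real.norm_eq_abs] using norm_le_pi_norm (x - y) j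
  set cg : ℝ := 2 ^ n * ((n:ℝ) + 8) with hcg
  have hcg0 : 0 ≤ cg := by rw [hcg]; positivity
  set c2 : ℝ := 2 ^ n * ((n:ℝ)^2 + 16 * n + 128) with hc2
  have hc20 : 0 ≤ c2 := by rw [hc2]; positivity
  have e : Fder d K mv α x - Fder d K mv α y
      = ∑ i, (((∏ j ∈ Finset.univ.erase i, gFun (α j) K (mv j) (x j)) * gFunD (α i) K (mv i) (x i))
          - ((∏ j ∈ Finset.univ.erase i, gFun (α j) K (mv j) (y j)) * gFunD (α i) K (mv i) (y i))) •
            ContinuousLinearMap.proj i := by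
    unfold Fder
    rw [← Finset.sum_sub_distrib]
    refine Finset.sum_congr rfl fun i _ => ?_
    rw [smul_smul, smul_smul]
    exact (sub_smul _ _ _).symm
  rw [e]
  refine (norm_sum_le _ _).trans ?_
  have hterm : ∀ i ∈ Finset.univ,
      ‖(((∏ j ∈ Finset.univ.erase i, gFun (α j) K (mv j) (x j)) * gFunD (α i) K (mv i) (x i))
          - ((∏ j ∈ Finset.univ.erase i, gFun (α j) K (mv j) (y j)) * gFunD (α i) K (mv i) (y i))) •
            ContinuousLinearMap.proj (R := ℝ) (φ := fun _ : Fin d => ℝ) i‖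
      ≤ ((2:ℝ) ^ n) ^ d * ((d:ℝ) * cg ^ 2 + c2) * K ^ 2 * ‖x - y‖ := by
    intro i _
    refine (norm_smul_proj d _ i).trans ?_
    have habs : |((∏ j ∈ Finset.univ.erase i, gFun (α j) K (mv j) (x j)) * gFunD (α i) K (mv i) (x i))
          - ((∏ j ∈ Finset.univ.erase i, gFun (α j) K (mv j) (y j)) * gFunD (α i) K (mv i) (y i))|
        ≤ ((2:ℝ) ^ n) ^ d * ((d:ℝ) * cg ^ 2 + c2) * K ^ 2 * ‖x - y‖ := by
      refine (abs_mul_sub_mul _ _ _ _).trans ?_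
      have b1 := prod_erase_bound (K := K) (mv := mv) hα hx i
      have b2 : |gFunD (α i) K (mv i) (x i) - gFunD (α i) K (mv i) (y i)|
          ≤ c2 * K ^ 2 * ‖x - y‖ := by
        refine ((gFunD_lip (hα i) hK _ (hx i) _ (hy i)).trans ?_)
        rw [hc2]
        exact mul_le_mul_of_nonneg_left (hcoord i) (by positivity)
      have b3 : |gFunD (α i) K (mv i) (y i)| ≤ cg * K := gFunD_bound (hα i) hK (hy i)
      have b4 : |∏ j ∈ Finset.univ.erase i, gFun (α j) K (mv j) (x j)
            - ∏ j ∈ Finset.univ.erase i, gFun (α j) K (mv j) (y j)|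
          ≤ ((2:ℝ) ^ n) ^ d * ((d:ℝ) * (cg * K * ‖x - y‖)) := by
        refine (abs_prod_sub_prod _ _ _ hA1 (fun j _ => gFun_bound (hα j) (hx j))
          (fun j _ => gFun_bound (hα j) (hy j))).trans ?_
        have hs : ∑ j ∈ Finset.univ.erase i, |gFun (α j) K (mv j) (x j) - gFun (α j) K (mv j) (y j)|
            ≤ (d:ℝ) * (cg * K * ‖x - y‖) := by
          have h1 : ∀ j ∈ Finset.univ.erase i,
              |gFun (α j) K (mv j) (x j) - gFun (α j) K (mv j) (y j)| ≤ cg * K * ‖x - y‖ := by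
            intro j _
            refine (gFun_lip (hα j) hK _ (hx j) _ (hy j)).trans ?_
            rw [hcg]
            exact mul_le_mul_of_nonneg_left (hcoord j) (by positivity)
          refine (Finset.sum_le_card_nsmul _ _ _ h1).trans ?_
          rw [nsmul_eq_mul]
          exact mul_le_mul_of_nonneg_right (by exact_mod_cast card_erase_le d i) (by positivity)
        exact mul_le_mul (pow_le_pow_right₀ hA1 (card_erase_le d i)) hs
          (Finset.sum_nonneg fun j _ => abs_nonneg _) (by positivity)
      have hAd0 : (0:ℝ) ≤ ((2:ℝ) ^ n) ^ d := by positivity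
      calc |∏ j ∈ Finset.univ.erase i, gFun (α j) K (mv j) (x j)| *
              |gFunD (α i) K (mv i) (x i) - gFunD (α i) K (mv i) (y i)|
            + |gFunD (α i) K (mv i) (y i)| *
              |∏ j ∈ Finset.univ.erase i, gFun (α j) K (mv j) (x j)
                - ∏ j ∈ Finset.univ.erase i, gFun (α j) K (mv j) (y j)|
          ≤ ((2:ℝ) ^ n) ^ d * (c2 * K ^ 2 * ‖x - y‖)
            + (cg * K) * (((2:ℝ) ^ n) ^ d * ((d:ℝ) * (cg * K * ‖x - y‖))) := by
            refine add_le_add (mul_le_mul b1 b2 (abs_nonneg _) hAd0)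
              (mul_le_mul b3 b4 (abs_nonneg _) (by positivity))
        _ = ((2:ℝ) ^ n) ^ d * ((d:ℝ) * cg ^ 2 + c2) * K ^ 2 * ‖x - y‖ := by ring
    exact habs
  refine (Finset.sum_le_card_nsmul _ _ _ hterm).trans ?_
  simp only [Finset.card_univ, Fintype.card_fin, nsmul_eq_mul]
  rw [hcg, hc2]
  exact le_of_eq (by ring)
lemma iFD_zero_of_local_zero {d : ℕ} {f : (Fin d → ℝ) → ℝ} {x : Fin d → ℝ}
    (h : f =ᶠ[nhds x] (fun _ => (0:ℝ))) (k : ℕ) : iteratedFDeriv ℝ k f x = 0 := by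
  have h2 : iteratedFDeriv ℝ k f x = iteratedFDeriv ℝ k (fun _ => (0:ℝ)) x := by
    rw [← iteratedFDerivWithin_univ, ← iteratedFDerivWithin_univ]
    exact Filter.EventuallyEq.iteratedFDerivWithin_eq (by rwa [nhdsWithin_univ]) h.eq_of_nhds k
  rw [h2, iteratedFDeriv_zero_fun]
  rfl

lemma off_support {d K : ℕ} (mv α : Fin d → ℕ) (hK : 0 < K) {x : Fin d → ℝ}
    (hx : x ∉ Icc (fun j => (4 * ((mv j : ℝ)) - 5) / (4 * K))
      (fun j => (4 * ((mv j : ℝ)) + 1) / (4 * K))) :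
    (fun x : Fin d → ℝ => ∏ i, gFun (α i) K (mv i) (x i)) =ᶠ[nhds x] (fun _ => (0:ℝ)) := by
  obtain ⟨j, hj⟩ : ∃ j, x j < (4 * ((mv j : ℝ)) - 5) / (4 * K)
      ∨ (4 * ((mv j : ℝ)) + 1) / (4 * K) < x j := by
    by_contra hcon
    push_neg at hcon
    exact hx ⟨fun j => (hcon j).1, fun j => (hcon j).2⟩
  rcases hj with hj | hj
  · have hopen : IsOpen {y : Fin d → ℝ | y j < (4 * ((mv j : ℝ)) - 5) / (4 * K)} :=
      isOpen_lt (continuous_apply j) continuous_const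
    filter_upwards [hopen.mem_nhds hj] with y hy
    refine Finset.prod_eq_zero (Finset.mem_univ j) ?_
    show gFun (α j) K (mv j) (y j) = 0
    unfold gFun
    rw [smOne_eq_zero_left hK (le_of_lt hy), mul_zero]
  · have hopen : IsOpen {y : Fin d → ℝ | (4 * ((mv j : ℝ)) + 1) / (4 * K) < y j} :=
      isOpen_lt continuous_const (continuous_apply j)
    filter_upwards [hopen.mem_nhds hj] with y hy
    refine Finset.prod_eq_zero (Finset.mem_univ j) ?_
    show gFun (α j) K (mv j) (y j) = 0
    unfold gFun
    rw [smOne_eq_zero_right hK (le_of_lt hy), mul_zero]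

lemma volume_box {d K : ℕ} (mv : Fin d → ℕ) (hK : 0 < K) :
    (volume (Icc (fun j => (4 * ((mv j : ℝ)) - 5) / (4 * K))
      (fun j => (4 * ((mv j : ℝ)) + 1) / (4 * K)))).toReal = (3 / (2 * (K:ℝ))) ^ d := by
  have hKpos : (0:ℝ) < K := by exact_mod_cast hK
  have hle : (fun j : Fin d => (4 * ((mv j : ℝ)) - 5) / (4 * K))
      ≤ fun j => (4 * ((mv j : ℝ)) + 1) / (4 * K) := by
    intro j
    apply div_le_div_of_nonneg_right ?_ (by positivity)
    · linarith
  rw [Real.volume_Icc_pi_toReal hle]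
  have heach : ∀ j : Fin d, (4 * ((mv j : ℝ)) + 1) / (4 * K) - (4 * ((mv j : ℝ)) - 5) / (4 * K)
      = 3 / (2 * (K:ℝ)) := by
    intro j
    field_simp
    ring
  rw [Finset.prod_congr rfl (fun j _ => heach j), Finset.prod_const, Finset.card_univ,
    Fintype.card_fin]
lemma norm_iFD_one {E : Type*} [NormedAddCommGroup E] [NormedSpace ℝ E] (f : E → ℝ) (x : E) :
    ‖iteratedFDeriv ℝ 1 f x‖ = ‖fderiv ℝ f x‖ := by
  have h1 := norm_iteratedFDeriv_fderiv (𝕜 := ℝ) (f := f) (x := x) (n := 0)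
  rw [norm_iteratedFDeriv_zero] at h1
  rw [← h1]

lemma norm_iFD_two {E : Type*} [NormedAddCommGroup E] [NormedSpace ℝ E] (f : E → ℝ) (x : E) :
    ‖iteratedFDeriv ℝ 2 f x‖ = ‖fderiv ℝ (fderiv ℝ f) x‖ := by
  have h1 := norm_iteratedFDeriv_fderiv (𝕜 := ℝ) (f := f) (x := x) (n := 1)
  have h2 := norm_iteratedFDeriv_fderiv (𝕜 := ℝ) (f := fderiv ℝ f) (x := x) (n := 0)
  rw [norm_iteratedFDeriv_zero] at h2
  rw [← h1, ← h2]

lemma arith1 {D Q G S Kr : ℝ} (hD : 0 ≤ D) (hQ : 0 ≤ Q) (hG : 0 ≤ G) (hS : 0 ≤ S)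
    (hK1 : 1 ≤ Kr) : D * (Q * (G * Kr)) ≤ D * Q * (S + G + 1) * Kr ^ 2 := by
  have hK0 : (0:ℝ) ≤ Kr := le_trans zero_le_one hK1
  have h1 : Kr ≤ Kr ^ 2 := by nlinarith
  have h2 : G * Kr ≤ (S + G + 1) * Kr ^ 2 := by
    nlinarith [mul_nonneg hG (sub_nonneg.mpr h1), mul_nonneg hS (sq_nonneg Kr), sq_nonneg Kr]
  calc D * (Q * (G * Kr)) ≤ D * (Q * ((S + G + 1) * Kr ^ 2)) :=
        mul_le_mul_of_nonneg_left (mul_le_mul_of_nonneg_left h2 hQ) hD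
    _ = D * Q * (S + G + 1) * Kr ^ 2 := by ring

set_option maxHeartbeats 2000000 in
/-- there is `C = C(n,d)` such that for every `K`, every `𝐦 ∈ {1,…,K}^d`
and every multi-index `α` with `|α| ≤ n-1`, the trunk basis function `x^α s_𝐦(x)` satisfies
`‖x^α s_𝐦‖_{H²([0,1]^d)} ≤ C K^{2 - d/2}`. -/
theorem trunk_basis_h2_bound
    (d n : ℕ) (hd : 0 < d) (hn : 0 < n) :
    ∃ C : ℝ, 0 < C ∧
      ∀ (K : ℕ), 0 < K → ∀ mv : Fin d → ℕ, (∀ j, 1 ≤ mv j ∧ mv j ≤ K) →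
      ∀ α : Fin d → ℕ, ∑ i, α i ≤ n - 1 →
        hNorm d 2 (fun x => (∏ i, x i ^ α i) * smProd d K mv x) ≤
          C * (K : ℝ) ^ ((2 : ℝ) - (d : ℝ) / 2) := by
  classical
  set A : ℝ := 2 ^ n with hA
  set cg : ℝ := 2 ^ n * ((n:ℝ) + 8) with hcg
  set c2 : ℝ := 2 ^ n * ((n:ℝ)^2 + 16 * (n:ℝ) + 128) with hc2
  set C₀ : ℝ := (d:ℝ) * A ^ d * ((d:ℝ) * cg ^ 2 + c2 + cg + 1) with hC₀
  have hd1 : (1:ℝ) ≤ (d:ℝ) := by exact_mod_cast hd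
  have hd0 : (0:ℝ) ≤ (d:ℝ) := le_trans zero_le_one hd1
  have hA1 : (1:ℝ) ≤ A := one_le_two_pow n
  have hA0 : (0:ℝ) < A := lt_of_lt_of_le zero_lt_one hA1
  have hcg0 : (0:ℝ) ≤ cg := by rw [hcg]; positivity
  have hc20 : (0:ℝ) ≤ c2 := by rw [hc2]; positivity
  have hAd1 : (1:ℝ) ≤ A ^ d := by
    calc (1:ℝ) = 1 ^ d := (one_pow d).symm
      _ ≤ A ^ d := pow_le_pow_left₀ zero_le_one hA1 d
  have hAd0 : (0:ℝ) < A ^ d := lt_of_lt_of_le zero_lt_one hAd1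
  have hC₀pos : 0 < C₀ := by
    rw [hC₀]
    have hdpos : (0:ℝ) < d := by exact_mod_cast hd
    have hP : (0:ℝ) < (d:ℝ) * cg ^ 2 + c2 + cg + 1 := by
      nlinarith [mul_nonneg hd0 (sq_nonneg cg)]
    exact mul_pos (mul_pos hdpos hAd0) hP
  refine ⟨C₀ * Real.sqrt (3 * (3/2) ^ d), by positivity, ?_⟩
  intro K hK mv hmv α hα
  have hK1 : (1:ℝ) ≤ (K:ℝ) := by exact_mod_cast hK
  have hKpos : (0:ℝ) < K := lt_of_lt_of_le zero_lt_one hK1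
  have hK2 : (1:ℝ) ≤ (K:ℝ)^2 := by nlinarith
  have hKK2 : (K:ℝ) ≤ (K:ℝ)^2 := by nlinarith
  have hαn : ∀ i, α i ≤ n := fun i =>
    le_trans (le_trans (Finset.single_le_sum (f := fun i => α i)
      (fun i _ => Nat.zero_le _) (Finset.mem_univ i)) hα) (Nat.sub_le n 1)
  have hfeq : (fun x : Fin d → ℝ => (∏ i, x i ^ α i) * smProd d K mv x)
      = fun x : Fin d → ℝ => ∏ i, gFun (α i) K (mv i) (x i) := by
    funext x
    rw [smProd, ← Finset.prod_mul_distrib]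
    rfl
  rw [hfeq]
  set f : (Fin d → ℝ) → ℝ := fun x => ∏ i, gFun (α i) K (mv i) (x i) with hf
  have hfd : ∀ x, HasFDerivAt f (Fder d K mv α x) x := hasFDerivAt_gprod d K mv α
  have hfderiv : fderiv ℝ f = Fder d K mv α := funext fun x => (hfd x).fderiv
  have hfc : Continuous f := continuous_iff_continuousAt.mpr fun x => (hfd x).continuousAt
  set U : Set (Fin d → ℝ) := Set.univ.pi (fun _ => Ioo (-2:ℝ) 2) with hU
  have hUopen : IsOpen U := isOpen_set_pi Set.finite_univ (fun i _ => isOpen_Ioo)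
  have hcube : ∀ x ∈ unitCube d, ∀ i, x i ∈ Icc (-2:ℝ) 2 := by
    intro x hx i
    have h0 : (0:ℝ) ≤ x i := by simpa using hx.1 i
    have h1 : x i ≤ 1 := by simpa using hx.2 i
    exact ⟨by linarith, by linarith⟩
  have hUx : ∀ x ∈ unitCube d, x ∈ U := by
    intro x hx
    rw [hU, Set.mem_pi]
    intro i _
    have h0 : (0:ℝ) ≤ x i := by simpa using hx.1 i
    have h1 : x i ≤ 1 := by simpa using hx.2 i
    exact ⟨by linarith, by linarith⟩
  have hUIcc : ∀ y ∈ U, ∀ i, y i ∈ Icc (-2:ℝ) 2 := by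
    intro y hy i
    rw [hU, Set.mem_pi] at hy
    have := hy i (Set.mem_univ i)
    exact ⟨le_of_lt this.1, le_of_lt this.2⟩
  set M : ℝ := C₀ * K ^ 2 with hM
  have hMpos : 0 < M := by positivity
  -- pointwise bound, order 0
  have hM0 : ∀ x ∈ unitCube d, ‖iteratedFDeriv ℝ 0 f x‖ ≤ M := by
    intro x hx
    rw [norm_iteratedFDeriv_zero, hf, Real.norm_eq_abs]
    have h1 : |∏ i, gFun (α i) K (mv i) (x i)| ≤ A ^ d := by
      have h2 := abs_prod_le Finset.univ (fun i => gFun (α i) K (mv i) (x i))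
        (le_of_lt hA0) (fun i _ => gFun_bound (hαn i) (hcube x hx i))
      rwa [Finset.card_univ, Fintype.card_fin] at h2
    refine h1.trans ?_
    have hP1 : (1:ℝ) ≤ (d:ℝ) * cg ^ 2 + c2 + cg + 1 := by
      nlinarith [mul_nonneg hd0 (mul_self_nonneg cg)]
    have hbig : (1:ℝ) ≤ (d:ℝ) * ((d:ℝ) * cg ^ 2 + c2 + cg + 1) * (K:ℝ)^2 := by
      have h3 : (1:ℝ) * 1 ≤ (d:ℝ) * ((d:ℝ) * cg ^ 2 + c2 + cg + 1) :=
        mul_le_mul hd1 hP1 zero_le_one hd0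
      have h4 : (1:ℝ) * 1 ≤ ((d:ℝ) * ((d:ℝ) * cg ^ 2 + c2 + cg + 1)) * (K:ℝ)^2 :=
        mul_le_mul (by linarith) hK2 zero_le_one (by linarith)
      linarith
    calc A ^ d = A ^ d * 1 := (mul_one _).symm
      _ ≤ A ^ d * ((d:ℝ) * ((d:ℝ) * cg ^ 2 + c2 + cg + 1) * (K:ℝ)^2) :=
          mul_le_mul_of_nonneg_left hbig (le_of_lt hAd0)
      _ = M := by rw [hM, hC₀]; ring
  -- pointwise bound, order 1
  have hM1 : ∀ x ∈ unitCube d, ‖iteratedFDeriv ℝ 1 f x‖ ≤ M := by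
    intro x hx
    have e1 := norm_iFD_one f x
    rw [e1, hfderiv]
    refine (Fder_norm_le hαn hK1 (fun i => hcube x hx i)).trans ?_
    rw [hM, hC₀, ← hcg, ← hA]
    exact arith1 hd0 hAd0.le hcg0
      (add_nonneg (mul_nonneg hd0 (sq_nonneg cg)) hc20) hK1
  -- Lipschitz bound for the derivative
  have hLF0 : (0:ℝ) ≤ (d:ℝ) * A ^ d * ((d:ℝ) * cg ^ 2 + c2) * (K:ℝ)^2 := by positivity
  have hlip : LipschitzOnWith
      (Real.toNNReal ((d:ℝ) * A ^ d * ((d:ℝ) * cg ^ 2 + c2) * (K:ℝ)^2))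
      (Fder d K mv α) U := by
    apply LipschitzOnWith.of_dist_le_mul
    intro p hp q hq
    rw [dist_eq_norm, dist_eq_norm, Real.coe_toNNReal _ hLF0]
    refine le_trans (Fder_lip hαn hK1 (hUIcc p hp) (hUIcc q hq)) ?_
    refine mul_le_mul_of_nonneg_right (le_of_eq ?_) (norm_nonneg _)
    rw [hA, hcg, hc2]
  -- pointwise bound, order 2
  have hM2 : ∀ x ∈ unitCube d, ‖iteratedFDeriv ℝ 2 f x‖ ≤ M := by
    intro x hx
    have e2 := norm_iFD_two f x
    rw [e2, hfderiv]
    refine le_trans (norm_fderiv_le_of_lipschitzOn ℝ (hUopen.mem_nhds (hUx x hx)) hlip) ?_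
    rw [Real.coe_toNNReal _ hLF0, hM, hC₀]
    have h5 : ((d:ℝ)*cg^2+c2 : ℝ) ≤ (d:ℝ)*cg^2+c2+cg+1 := by linarith
    exact mul_le_mul_of_nonneg_right
      (mul_le_mul_of_nonneg_left h5 (mul_nonneg hd0 hAd0.le)) (sq_nonneg _)
  -- support box
  set lo : Fin d → ℝ := fun j => (4 * ((mv j : ℝ)) - 5) / (4 * K) with hlo
  set hib : Fin d → ℝ := fun j => (4 * ((mv j : ℝ)) + 1) / (4 * K) with hhib
  have hzero : ∀ x, x ∉ Icc lo hib → ∀ k, iteratedFDeriv ℝ k f x = 0 := fun x hx k =>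
    iFD_zero_of_local_zero (off_support mv α hK hx) k
  have hms : MeasurableSet (Icc lo hib) := measurableSet_Icc
  have hSfin : volume (Icc lo hib) < ⊤ := (isCompact_Icc).measure_lt_top
  have hSvol : (volume (Icc lo hib)).toReal = (3/(2*(K:ℝ)))^d := volume_box mv hK
  -- measurability
  have hmeas0 : Measurable (fun x => ‖iteratedFDeriv ℝ 0 f x‖ ^ 2) := by
    have e : (fun x : Fin d → ℝ => ‖iteratedFDeriv ℝ 0 f x‖ ^ 2) = fun x => ‖f x‖ ^ 2 :=
      funext fun x => by rw [norm_iteratedFDeriv_zero]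
    rw [e]
    exact (hfc.norm.measurable).pow_const 2
  have hmeas1 : Measurable (fun x => ‖iteratedFDeriv ℝ 1 f x‖ ^ 2) := by
    have e : (fun x : Fin d → ℝ => ‖iteratedFDeriv ℝ 1 f x‖ ^ 2)
        = fun x => ‖fderiv ℝ f x‖ ^ 2 := funext fun x => by rw [norm_iFD_one]
    rw [e]
    exact ((measurable_fderiv ℝ f).norm).pow_const 2
  have hmeas2 : Measurable (fun x => ‖iteratedFDeriv ℝ 2 f x‖ ^ 2) := by
    have e : (fun x : Fin d → ℝ => ‖iteratedFDeriv ℝ 2 f x‖ ^ 2)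
        = fun x => ‖fderiv ℝ (fderiv ℝ f) x‖ ^ 2 := funext fun x => by rw [norm_iFD_two]
    rw [e]
    exact ((measurable_fderiv ℝ (fderiv ℝ f)).norm).pow_const 2
  -- the key integral bound
  have hkey : ∀ k : ℕ, Measurable (fun x => ‖iteratedFDeriv ℝ k f x‖ ^ 2) →
      (∀ x ∈ unitCube d, ‖iteratedFDeriv ℝ k f x‖ ≤ M) →
      ∫ x in unitCube d, ‖iteratedFDeriv ℝ k f x‖ ^ 2 ≤ M^2 * (3/(2*(K:ℝ)))^d := by
    intro k hm hb
    have hindeq : ∀ x, ‖iteratedFDeriv ℝ k f x‖^2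
        = (Icc lo hib).indicator (fun x => ‖iteratedFDeriv ℝ k f x‖^2) x := by
      intro x
      by_cases hx : x ∈ Icc lo hib
      · rw [Set.indicator_of_mem hx]
      · rw [Set.indicator_of_notMem hx, hzero x hx k]
        simp
    have hμ : volume (unitCube d ∩ Icc lo hib) < ⊤ :=
      lt_of_le_of_lt (measure_mono Set.inter_subset_right) hSfin
    have hb2 : ∀ x ∈ unitCube d ∩ Icc lo hib, ‖(‖iteratedFDeriv ℝ k f x‖ ^ 2)‖ ≤ M^2 := by
      intro x hx
      rw [Real.norm_of_nonneg (by positivity)]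
      exact pow_le_pow_left₀ (norm_nonneg _) (hb x hx.1) 2
    have h3 := norm_setIntegral_le_of_norm_le_const (μ := volume)
      (s := unitCube d ∩ Icc lo hib) hμ hb2
    calc (∫ x in unitCube d, ‖iteratedFDeriv ℝ k f x‖^2)
        = ∫ x in unitCube d, (Icc lo hib).indicator
            (fun x => ‖iteratedFDeriv ℝ k f x‖^2) x :=
          integral_congr_ae (Filter.Eventually.of_forall hindeq)
      _ = ∫ x in unitCube d ∩ Icc lo hib, ‖iteratedFDeriv ℝ k f x‖^2 :=
          setIntegral_indicator hms
      _ ≤ M^2 * (volume (unitCube d ∩ Icc lo hib)).toReal := by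
          refine le_trans (le_abs_self _) ?_
          rw [← Real.norm_eq_abs]
          exact h3
      _ ≤ M^2 * (3/(2*(K:ℝ)))^d := by
          refine mul_le_mul_of_nonneg_left ?_ (by positivity)
          exact le_trans (ENNReal.toReal_mono (ne_of_lt hSfin)
            (measure_mono Set.inter_subset_right)) (le_of_eq hSvol)
  have hI0 := hkey 0 hmeas0 hM0
  have hI1 := hkey 1 hmeas1 hM1
  have hI2 := hkey 2 hmeas2 hM2
  -- final arithmetic
  have hKd : (0:ℝ) < (K:ℝ)^d := by positivity
  have hsq : 3 * (M^2 * (3/(2*(K:ℝ)))^d)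
      = (C₀ * Real.sqrt (3 * (3/2) ^ d) * (K:ℝ) ^ ((2:ℝ) - (d:ℝ)/2))^2 := by
    have h1 : Real.sqrt (3 * (3/2) ^ d) ^ 2 = 3 * (3/2) ^ d := Real.sq_sqrt (by positivity)
    have h2 : ((K:ℝ) ^ ((2:ℝ) - (d:ℝ)/2))^2 = (K:ℝ)^(4:ℕ) / (K:ℝ)^d := by
      rw [← Real.rpow_natCast ((K:ℝ) ^ ((2:ℝ) - (d:ℝ)/2)) 2, ← Real.rpow_mul (le_of_lt hKpos)]
      rw [show ((2:ℝ) - (d:ℝ)/2) * ((2:ℕ):ℝ) = (4:ℝ) - (d:ℝ) by push_cast; ring]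
      rw [Real.rpow_sub hKpos]
      rw [show (4:ℝ) = ((4:ℕ):ℝ) by norm_num, Real.rpow_natCast, Real.rpow_natCast]
    have h3 : (3/(2*(K:ℝ)))^d = (3/2)^d / (K:ℝ)^d := by
      rw [show (3/(2*(K:ℝ))) = (3/2)/(K:ℝ) from (div_div 3 2 (K:ℝ)).symm]
      exact div_pow _ _ d
    rw [h3, hM]
    have expand : (C₀ * Real.sqrt (3 * (3/2) ^ d) * (K:ℝ) ^ ((2:ℝ) - (d:ℝ)/2))^2
        = C₀^2 * (Real.sqrt (3 * (3/2) ^ d)^2) * (((K:ℝ) ^ ((2:ℝ) - (d:ℝ)/2))^2) := by ring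
    rw [expand, h1, h2]
    field_simp
  rw [hNorm]
  rw [show (2:ℕ) + 1 = 3 from rfl, Finset.sum_range_succ, Finset.sum_range_succ,
    Finset.sum_range_one]
  have hsum : (∫ x in unitCube d, ‖iteratedFDeriv ℝ 0 f x‖^2)
      + (∫ x in unitCube d, ‖iteratedFDeriv ℝ 1 f x‖^2)
      + (∫ x in unitCube d, ‖iteratedFDeriv ℝ 2 f x‖^2)
      ≤ (C₀ * Real.sqrt (3 * (3/2) ^ d) * (K:ℝ) ^ ((2:ℝ) - (d:ℝ)/2))^2 := by
    rw [← hsq]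
    linarith
  calc Real.sqrt ((∫ x in unitCube d, ‖iteratedFDeriv ℝ 0 f x‖^2)
      + (∫ x in unitCube d, ‖iteratedFDeriv ℝ 1 f x‖^2)
      + (∫ x in unitCube d, ‖iteratedFDeriv ℝ 2 f x‖^2))
      ≤ Real.sqrt ((C₀ * Real.sqrt (3 * (3/2) ^ d) * (K:ℝ) ^ ((2:ℝ) - (d:ℝ)/2))^2) :=
        Real.sqrt_le_sqrt hsum
    _ = C₀ * Real.sqrt (3 * (3/2) ^ d) * (K:ℝ) ^ ((2:ℝ) - (d:ℝ)/2) :=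
        Real.sqrt_sq (by positivity)

end
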